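/- Proposition 3.2(1) (variance estimate for controlled backward random walks): For every control ξ and every k with l' ≤ k ≤ l+1, one has (d̃^k)² ≤ σ̃^k ≤ ((t_{l+1} − t_k)/λ)·Δx, where σ̃^k := E_{μ(·;ξ)}[|γ^k − η^k(γ)|²] and d̃^k := E_{μ(·;ξ)}[|γ^k − η^k(γ)|]. -/

import Mathlib

/-- The sign (±1) of the step of the backward random walk between time levels
`k-1` and `k`, encoded by the Boolean family `s` indexed by `Finset.Ioc l' (l+1)`
(`true` = step `+Δx`, `false` = step `−Δx`); `0` outside the time window. -/
def stepVal (l' l : ℕ) (s : {k // k ∈ Finset.Ioc l' (l + 1)} → Bool) (k : ℕ) : ℤ :=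
  if h : k ∈ Finset.Ioc l' (l + 1) then (if s ⟨k, h⟩ then 1 else -1) else 0

/-- The space index of the path `γ` determined by the steps `s`, at time level `k`:
`γ^{l+1} = x_n` and `γ^k − γ^{k−1} = (stepVal s k)·Δx`. -/
def pathIdx (n : ℤ) (l' l : ℕ) (s : {k // k ∈ Finset.Ioc l' (l + 1)} → Bool) (k : ℕ) : ℤ :=
  n - ∑ k' ∈ Finset.Ioc k (l + 1), stepVal l' l s k'

/-- The position `γ^k` of the path determined by the steps `s`. -/
noncomputable def pathPos (Δx : ℝ) (n : ℤ) (l' l : ℕ)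
    (s : {k // k ∈ Finset.Ioc l' (l + 1)} → Bool) (k : ℕ) : ℝ :=
  (pathIdx n l' l s k : ℝ) * Δx

/-- The probability `μ(γ; ξ)` of the path determined by the steps `s`, under the
control `ξ` (a function of the position and the time index). -/
noncomputable def pathProb (Δx lam : ℝ) (n : ℤ) (l' l : ℕ) (ξ : ℝ → ℕ → ℝ)
    (s : {k // k ∈ Finset.Ioc l' (l + 1)} → Bool) : ℝ :=
  ∏ k ∈ Finset.Ioc l' (l + 1),
    (1 / 2 + lam / 2 * (stepVal l' l s k : ℝ) * ξ (pathPos Δx n l' l s k) k)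

/-- The expectation `E_{μ(·;ξ)}[f(γ)]` over all backward paths. -/
noncomputable def walkExp (Δx lam : ℝ) (n : ℤ) (l' l : ℕ) (ξ : ℝ → ℕ → ℝ)
    (f : ({k // k ∈ Finset.Ioc l' (l + 1)} → Bool) → ℝ) : ℝ :=
  ∑ s : {k // k ∈ Finset.Ioc l' (l + 1)} → Bool, pathProb Δx lam n l' l ξ s * f s

/-- The random variable `η^k(γ) = γ^{l+1} − Σ_{k<k'≤l+1} ξ(γ^{k'}, t_{k'}) Δt`. -/
noncomputable def etaVal (Δx Δt : ℝ) (n : ℤ) (l' l : ℕ) (ξ : ℝ → ℕ → ℝ)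
    (s : {k // k ∈ Finset.Ioc l' (l + 1)} → Bool) (k : ℕ) : ℝ :=
  (n : ℝ) * Δx - ∑ k' ∈ Finset.Ioc k (l + 1), ξ (pathPos Δx n l' l s k') k' * Δt

namespace Stmt4

variable {Δx Δt lam : ℝ} {n : ℤ} {l' l : ℕ} {ξ : ℝ → ℕ → ℝ}

abbrev Idx (l' l : ℕ) := {k // k ∈ Finset.Ioc l' (l + 1)}

/-- One factor of the path probability. -/
noncomputable def fac (Δx lam : ℝ) (n : ℤ) (l' l : ℕ) (ξ : ℝ → ℕ → ℝ)
    (s : Idx l' l → Bool) (k : ℕ) : ℝ :=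
  1 / 2 + lam / 2 * (stepVal l' l s k : ℝ) * ξ (pathPos Δx n l' l s k) k

/-- Partial expectation: only the probability factors at levels `> j` are kept. -/
noncomputable def W (Δx lam : ℝ) (n : ℤ) (l' l : ℕ) (ξ : ℝ → ℕ → ℝ) (j : ℕ)
    (f : (Idx l' l → Bool) → ℝ) : ℝ :=
  ∑ s : Idx l' l → Bool, (∏ k ∈ Finset.Ioc j (l + 1), fac Δx lam n l' l ξ s k) * f s

/-- The random variable `γ^k − η^k`. -/
noncomputable def Xv (Δx Δt : ℝ) (n : ℤ) (l' l : ℕ) (ξ : ℝ → ℕ → ℝ) (k : ℕ)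
    (s : Idx l' l → Bool) : ℝ :=
  pathPos Δx n l' l s k - etaVal Δx Δt n l' l ξ s k

lemma walkExp_eq (f : (Idx l' l → Bool) → ℝ) :
    walkExp Δx lam n l' l ξ f = W Δx lam n l' l ξ l' f := rfl

/-- Flip the step at index `j`. -/
def flip (j : Idx l' l) (s : Idx l' l → Bool) : Idx l' l → Bool :=
  Function.update s j (!(s j))

lemma flip_flip (j : Idx l' l) (s : Idx l' l → Bool) : flip j (flip j s) = s := by
  funext i
  by_cases h : i = j
  · subst h; simp [flip]
  · simp [flip, Function.update_apply, h]

/-- Flipping as a self-equivalence of path space. -/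
def flipE (j : Idx l' l) : (Idx l' l → Bool) ≃ (Idx l' l → Bool) :=
  ⟨flip j, flip j, flip_flip j, flip_flip j⟩

lemma stepVal_flip_ne {j : ℕ} (hj : j ∈ Finset.Ioc l' (l + 1)) {k : ℕ} (hk : k ≠ j)
    (s : Idx l' l → Bool) :
    stepVal l' l (flip ⟨j, hj⟩ s) k = stepVal l' l s k := by
  unfold stepVal
  split
  · next h =>
    have : (⟨k, h⟩ : Idx l' l) ≠ ⟨j, hj⟩ := by simp [Subtype.ext_iff, hk]
    simp [flip, Function.update_apply, this]
  · rfl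

lemma stepVal_flip_self {j : ℕ} (hj : j ∈ Finset.Ioc l' (l + 1)) (s : Idx l' l → Bool) :
    stepVal l' l (flip ⟨j, hj⟩ s) j = -stepVal l' l s j := by
  unfold stepVal
  rw [dif_pos hj, dif_pos hj]
  simp only [flip, Function.update_self]
  cases s ⟨j, hj⟩ <;> simp

lemma pathPos_flip {j : ℕ} (hj : j ∈ Finset.Ioc l' (l + 1)) {k : ℕ} (hk : j ≤ k)
    (s : Idx l' l → Bool) :
    pathPos Δx n l' l (flip ⟨j, hj⟩ s) k = pathPos Δx n l' l s k := by
  unfold pathPos pathIdx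
  have h : (∑ k' ∈ Finset.Ioc k (l + 1), stepVal l' l (flip ⟨j, hj⟩ s) k')
      = ∑ k' ∈ Finset.Ioc k (l + 1), stepVal l' l s k' :=
    Finset.sum_congr rfl fun k' hk' =>
      stepVal_flip_ne hj (by have := Finset.mem_Ioc.mp hk'; omega) s
  rw [h]

lemma etaVal_flip {j : ℕ} (hj : j ∈ Finset.Ioc l' (l + 1)) {k : ℕ} (hk : j ≤ k)
    (s : Idx l' l → Bool) :
    etaVal Δx Δt n l' l ξ (flip ⟨j, hj⟩ s) k = etaVal Δx Δt n l' l ξ s k := by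
  unfold etaVal
  congr 1
  refine Finset.sum_congr rfl fun k' hk' => ?_
  rw [pathPos_flip hj (by have := Finset.mem_Ioc.mp hk'; omega)]

lemma Xv_flip {j : ℕ} (hj : j ∈ Finset.Ioc l' (l + 1)) {k : ℕ} (hk : j ≤ k)
    (s : Idx l' l → Bool) :
    Xv Δx Δt n l' l ξ k (flip ⟨j, hj⟩ s) = Xv Δx Δt n l' l ξ k s := by
  unfold Xv
  rw [pathPos_flip hj hk, etaVal_flip hj hk]

lemma fac_flip_ne {j : ℕ} (hj : j ∈ Finset.Ioc l' (l + 1)) {k : ℕ} (hk : j < k)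
    (s : Idx l' l → Bool) :
    fac Δx lam n l' l ξ (flip ⟨j, hj⟩ s) k = fac Δx lam n l' l ξ s k := by
  unfold fac
  rw [stepVal_flip_ne hj (by omega), pathPos_flip hj (le_of_lt hk)]

lemma fac_flip_self {j : ℕ} (hj : j ∈ Finset.Ioc l' (l + 1)) (s : Idx l' l → Bool) :
    fac Δx lam n l' l ξ (flip ⟨j, hj⟩ s) j = 1 - fac Δx lam n l' l ξ s j := by
  unfold fac
  rw [stepVal_flip_self hj, pathPos_flip hj le_rfl]
  push_cast
  ring

lemma prod_flip {j : ℕ} (hj : j ∈ Finset.Ioc l' (l + 1)) {k : ℕ} (hk : j ≤ k)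
    (s : Idx l' l → Bool) :
    (∏ k' ∈ Finset.Ioc k (l + 1), fac Δx lam n l' l ξ (flip ⟨j, hj⟩ s) k')
      = ∏ k' ∈ Finset.Ioc k (l + 1), fac Δx lam n l' l ξ s k' := by
  refine Finset.prod_congr rfl fun k' hk' => ?_
  exact fac_flip_ne hj (by have := Finset.mem_Ioc.mp hk'; omega) s

lemma Ioc_insert {j : ℕ} (hj : j < l + 1) :
    Finset.Ioc j (l + 1) = insert (j + 1) (Finset.Ioc (j + 1) (l + 1)) := by
  ext x
  simp only [Finset.mem_Ioc, Finset.mem_insert]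
  omega

lemma mem_A {j : ℕ} (hj1 : l' ≤ j) (hj2 : j < l + 1) : j + 1 ∈ Finset.Ioc l' (l + 1) := by
  simp only [Finset.mem_Ioc]; omega

/-- Key identity: if `f` is invariant under flipping the step at level `j+1`,
integrating out that step halves the partial expectation. -/
lemma W_step {j : ℕ} (hj1 : l' ≤ j) (hj2 : j < l + 1) (f : (Idx l' l → Bool) → ℝ)
    (hf : ∀ s, f (flip ⟨j + 1, mem_A hj1 hj2⟩ s) = f s) :
    W Δx lam n l' l ξ j f = 1 / 2 * W Δx lam n l' l ξ (j + 1) f := by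
  have hnm : (j + 1) ∉ Finset.Ioc (j + 1) (l + 1) := by simp
  have hA := mem_A hj1 hj2
  have h1 : W Δx lam n l' l ξ j f
      = ∑ s : Idx l' l → Bool,
          fac Δx lam n l' l ξ s (j + 1)
            * (∏ k ∈ Finset.Ioc (j + 1) (l + 1), fac Δx lam n l' l ξ s k) * f s := by
    unfold W
    refine Finset.sum_congr rfl fun s _ => ?_
    rw [Ioc_insert hj2, Finset.prod_insert hnm]
  have h2 : W Δx lam n l' l ξ j f
      = ∑ s : Idx l' l → Bool,
          (1 - fac Δx lam n l' l ξ s (j + 1))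
            * (∏ k ∈ Finset.Ioc (j + 1) (l + 1), fac Δx lam n l' l ξ s k) * f s := by
    rw [h1, ← Equiv.sum_comp (flipE ⟨j + 1, hA⟩)
      (fun s => fac Δx lam n l' l ξ s (j + 1)
        * (∏ k ∈ Finset.Ioc (j + 1) (l + 1), fac Δx lam n l' l ξ s k) * f s)]
    have hfe : ∀ s : Idx l' l → Bool,
        (flipE (⟨j + 1, hA⟩ : Idx l' l)) s = flip ⟨j + 1, hA⟩ s := fun _ => rfl
    simp only [hfe]
    refine Finset.sum_congr rfl fun s _ => ?_
    rw [fac_flip_self hA, prod_flip hA le_rfl, hf]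
  have h3 : (∑ s : Idx l' l → Bool,
        fac Δx lam n l' l ξ s (j + 1)
          * (∏ k ∈ Finset.Ioc (j + 1) (l + 1), fac Δx lam n l' l ξ s k) * f s)
      + (∑ s : Idx l' l → Bool,
        (1 - fac Δx lam n l' l ξ s (j + 1))
          * (∏ k ∈ Finset.Ioc (j + 1) (l + 1), fac Δx lam n l' l ξ s k) * f s)
      = W Δx lam n l' l ξ (j + 1) f := by
    rw [← Finset.sum_add_distrib]
    unfold W
    refine Finset.sum_congr rfl fun s _ => ?_
    ring
  linarith [h1, h2, h3]

lemma fac_nonneg (hlam0 : 0 < lam)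
    (hξ : ∀ (x : ℝ) (k : ℕ), ξ x k ∈ Set.Icc (-lam⁻¹) lam⁻¹)
    (s : Idx l' l → Bool) (k : ℕ) : 0 ≤ fac Δx lam n l' l ξ s k := by
  have hE : (stepVal l' l s k : ℝ) = 0 ∨ (stepVal l' l s k : ℝ) = 1
      ∨ (stepVal l' l s k : ℝ) = -1 := by
    unfold stepVal
    split
    · cases s ⟨k, by assumption⟩ <;> simp
    · simp
  have h1 := (hξ (pathPos Δx n l' l s k) k).1
  have h2 := (hξ (pathPos Δx n l' l s k) k).2
  have hinv : lam * lam⁻¹ = 1 := mul_inv_cancel₀ (ne_of_gt hlam0)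
  unfold fac
  rcases hE with h | h | h <;> rw [h] <;> nlinarith

lemma prod_fac_nonneg (hlam0 : 0 < lam)
    (hξ : ∀ (x : ℝ) (k : ℕ), ξ x k ∈ Set.Icc (-lam⁻¹) lam⁻¹)
    (s : Idx l' l → Bool) (j : ℕ) :
    0 ≤ ∏ k ∈ Finset.Ioc j (l + 1), fac Δx lam n l' l ξ s k :=
  Finset.prod_nonneg fun k _ => fac_nonneg hlam0 hξ s k

/-- The decomposition `X_k = X_{k+1} + ξ Δt − (step) Δx`. -/
lemma Xv_succ {k : ℕ} (hk2 : k < l + 1) (s : Idx l' l → Bool) :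
    Xv Δx Δt n l' l ξ k s
      = Xv Δx Δt n l' l ξ (k + 1) s
        + ξ (pathPos Δx n l' l s (k + 1)) (k + 1) * Δt
        - (stepVal l' l s (k + 1) : ℝ) * Δx := by
  have hnm : (k + 1) ∉ Finset.Ioc (k + 1) (l + 1) := by simp
  have hpos : pathPos Δx n l' l s k
      = pathPos Δx n l' l s (k + 1) - (stepVal l' l s (k + 1) : ℝ) * Δx := by
    unfold pathPos pathIdx
    rw [Ioc_insert hk2, Finset.sum_insert hnm]
    push_cast
    ring
  have heta : etaVal Δx Δt n l' l ξ s k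
      = etaVal Δx Δt n l' l ξ s (k + 1) - ξ (pathPos Δx n l' l s (k + 1)) (k + 1) * Δt := by
    unfold etaVal
    rw [Ioc_insert hk2, Finset.sum_insert hnm]
    ring
  unfold Xv
  rw [hpos, heta]
  ring

lemma Xv_top (s : Idx l' l → Bool) : Xv Δx Δt n l' l ξ (l + 1) s = 0 := by
  unfold Xv pathPos pathIdx etaVal
  simp

/-- The one–step variance inequality. -/
lemma W_sq_step (hΔx : 0 < Δx) (hΔt : 0 < Δt) (hlam : lam = Δt / Δx)
    (hξ : ∀ (x : ℝ) (k : ℕ), ξ x k ∈ Set.Icc (-lam⁻¹) lam⁻¹)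
    {k : ℕ} (hk1 : l' ≤ k) (hk2 : k < l + 1) :
    2 * W Δx lam n l' l ξ k (fun s => (Xv Δx Δt n l' l ξ k s) ^ 2)
      ≤ W Δx lam n l' l ξ (k + 1)
          (fun s => (Xv Δx Δt n l' l ξ (k + 1) s) ^ 2 + Δx ^ 2) := by
  have hlam0 : 0 < lam := by rw [hlam]; positivity
  have hTD : Δt = lam * Δx := by rw [hlam, div_mul_cancel₀ _ (ne_of_gt hΔx)]
  have hnm : (k + 1) ∉ Finset.Ioc (k + 1) (l + 1) := by simp
  have hA := mem_A hk1 hk2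
  set g : (Idx l' l → Bool) → ℝ := fun s => (Xv Δx Δt n l' l ξ k s) ^ 2 with hg
  have h1 : W Δx lam n l' l ξ k g
      = ∑ s : Idx l' l → Bool,
          fac Δx lam n l' l ξ s (k + 1)
            * (∏ j ∈ Finset.Ioc (k + 1) (l + 1), fac Δx lam n l' l ξ s j) * g s := by
    unfold W
    refine Finset.sum_congr rfl fun s _ => ?_
    rw [Ioc_insert hk2, Finset.prod_insert hnm]
  have h2 : W Δx lam n l' l ξ k g
      = ∑ s : Idx l' l → Bool,
          (1 - fac Δx lam n l' l ξ s (k + 1))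
            * (∏ j ∈ Finset.Ioc (k + 1) (l + 1), fac Δx lam n l' l ξ s j)
            * g (flip ⟨k + 1, hA⟩ s) := by
    rw [h1, ← Equiv.sum_comp (flipE ⟨k + 1, hA⟩)
      (fun s => fac Δx lam n l' l ξ s (k + 1)
        * (∏ j ∈ Finset.Ioc (k + 1) (l + 1), fac Δx lam n l' l ξ s j) * g s)]
    have hfe : ∀ s : Idx l' l → Bool,
        (flipE (⟨k + 1, hA⟩ : Idx l' l)) s = flip ⟨k + 1, hA⟩ s := fun _ => rfl
    simp only [hfe]
    refine Finset.sum_congr rfl fun s _ => ?_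
    rw [fac_flip_self hA, prod_flip hA le_rfl]
  have hsum : 2 * W Δx lam n l' l ξ k g
      = ∑ s : Idx l' l → Bool,
          (∏ j ∈ Finset.Ioc (k + 1) (l + 1), fac Δx lam n l' l ξ s j)
            * (fac Δx lam n l' l ξ s (k + 1) * g s
              + (1 - fac Δx lam n l' l ξ s (k + 1)) * g (flip ⟨k + 1, hA⟩ s)) := by
    have h12 := congrArg₂ (· + ·) h1 h2
    rw [two_mul, h12, ← Finset.sum_add_distrib]
    refine Finset.sum_congr rfl fun s _ => ?_
    ring
  rw [hsum]
  unfold W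
  refine Finset.sum_le_sum fun s _ => ?_
  refine mul_le_mul_of_nonneg_left ?_ (prod_fac_nonneg hlam0 hξ s (k + 1))
  -- pointwise inequality
  have hgs : g s = (Xv Δx Δt n l' l ξ (k + 1) s
      + ξ (pathPos Δx n l' l s (k + 1)) (k + 1) * Δt
      - (stepVal l' l s (k + 1) : ℝ) * Δx) ^ 2 := by
    rw [hg]
    simp only
    rw [Xv_succ hk2]
  have hgs' : g (flip ⟨k + 1, hA⟩ s) = (Xv Δx Δt n l' l ξ (k + 1) s
      + ξ (pathPos Δx n l' l s (k + 1)) (k + 1) * Δt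
      + (stepVal l' l s (k + 1) : ℝ) * Δx) ^ 2 := by
    rw [hg]
    simp only
    rw [Xv_succ hk2, Xv_flip hA le_rfl, pathPos_flip hA le_rfl, stepVal_flip_self hA]
    push_cast
    ring
  have hfacv : fac Δx lam n l' l ξ s (k + 1)
      = 1 / 2 + lam / 2 * (stepVal l' l s (k + 1) : ℝ)
          * ξ (pathPos Δx n l' l s (k + 1)) (k + 1) := rfl
  rw [hgs, hgs', hfacv]
  have hE : ((stepVal l' l s (k + 1) : ℤ) : ℝ) = 1
      ∨ ((stepVal l' l s (k + 1) : ℤ) : ℝ) = -1 := by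
    unfold stepVal
    rw [dif_pos hA]
    cases s ⟨k + 1, hA⟩ <;> simp
  rw [hTD]
  rcases hE with h | h <;> rw [h] <;>
    nlinarith [sq_nonneg (lam * ξ (pathPos Δx n l' l s (k + 1)) (k + 1) * Δx)]

/-- Halving chain. -/
lemma W_chain (K : ℕ) (hK : K ≤ l + 1) (f : (Idx l' l → Bool) → ℝ)
    (hf : ∀ (j : ℕ) (hjA : j ∈ Finset.Ioc l' (l + 1)), j ≤ K →
      ∀ s, f (flip ⟨j, hjA⟩ s) = f s) :
    ∀ d j, j + d = K → l' ≤ j →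
      W Δx lam n l' l ξ j f = (1 / 2 : ℝ) ^ d * W Δx lam n l' l ξ K f := by
  intro d
  induction d with
  | zero => intro j hj _; simp [show j = K by omega]
  | succ d ih =>
    intro j hj hj2
    have hjlt : j < l + 1 := by omega
    have hstep := W_step (n := n) (Δx := Δx) (lam := lam) (ξ := ξ) hj2 hjlt f
      (hf (j + 1) (mem_A hj2 hjlt) (by omega))
    rw [hstep, ih (j + 1) (by omega) (by omega)]
    ring

lemma W_top_one : W Δx lam n l' l ξ (l + 1) (fun _ => 1) = (2 : ℝ) ^ (l + 1 - l') := by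
  unfold W
  simp only [Finset.Ioc_self, Finset.prod_empty, one_mul, Finset.sum_const, nsmul_eq_mul,
    mul_one, Finset.card_univ]
  rw [Fintype.card_fun, Fintype.card_coe, Nat.card_Ioc, Fintype.card_bool]
  push_cast
  ring

lemma W_one (j : ℕ) (hj1 : l' ≤ j) (hj2 : j ≤ l + 1) :
    W Δx lam n l' l ξ j (fun _ => 1)
      = (1 / 2 : ℝ) ^ (l + 1 - j) * (2 : ℝ) ^ (l + 1 - l') := by
  rw [W_chain (l + 1) le_rfl (fun _ => 1) (fun _ _ _ _ => rfl) (l + 1 - j) j (by omega) hj1,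
    W_top_one]

lemma W_add (j : ℕ) (f g : (Idx l' l → Bool) → ℝ) :
    W Δx lam n l' l ξ j (fun s => f s + g s)
      = W Δx lam n l' l ξ j f + W Δx lam n l' l ξ j g := by
  unfold W
  rw [← Finset.sum_add_distrib]
  exact Finset.sum_congr rfl fun s _ => by ring

lemma W_const (j : ℕ) (c : ℝ) :
    W Δx lam n l' l ξ j (fun _ => c) = c * W Δx lam n l' l ξ j (fun _ => 1) := by
  unfold W
  rw [Finset.mul_sum]
  exact Finset.sum_congr rfl fun s _ => by ring

/-- The variance bound by downward induction. -/
lemma W_var (hΔx : 0 < Δx) (hΔt : 0 < Δt) (hlam : lam = Δt / Δx)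
    (hξ : ∀ (x : ℝ) (k : ℕ), ξ x k ∈ Set.Icc (-lam⁻¹) lam⁻¹) :
    ∀ d j, j + d = l + 1 → l' ≤ j →
      W Δx lam n l' l ξ j (fun s => (Xv Δx Δt n l' l ξ j s) ^ 2)
        ≤ (d : ℝ) * Δx ^ 2 * W Δx lam n l' l ξ j (fun _ => 1) := by
  intro d
  induction d with
  | zero =>
    intro j hj _
    have hj' : j = l + 1 := by omega
    subst hj'
    have : W Δx lam n l' l ξ (l + 1) (fun s => (Xv Δx Δt n l' l ξ (l + 1) s) ^ 2) = 0 := by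
      unfold W
      refine Finset.sum_eq_zero fun s _ => ?_
      simp [Xv_top]
    rw [this]
    simp
  | succ d ih =>
    intro j hj hj2
    have hjlt : j < l + 1 := by omega
    have h1 := W_sq_step (n := n) hΔx hΔt hlam hξ hj2 hjlt
    have h2 : W Δx lam n l' l ξ (j + 1)
        (fun s => (Xv Δx Δt n l' l ξ (j + 1) s) ^ 2 + Δx ^ 2)
        = W Δx lam n l' l ξ (j + 1) (fun s => (Xv Δx Δt n l' l ξ (j + 1) s) ^ 2)
          + Δx ^ 2 * W Δx lam n l' l ξ (j + 1) (fun _ => 1) := by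
      rw [W_add, W_const]
    have h3 := ih (j + 1) (by omega) (by omega)
    have h4 : W Δx lam n l' l ξ j (fun _ => 1)
        = 1 / 2 * W Δx lam n l' l ξ (j + 1) (fun _ => 1) :=
      W_step hj2 hjlt (fun _ => 1) (fun _ => rfl)
    push_cast
    calc W Δx lam n l' l ξ j (fun s => (Xv Δx Δt n l' l ξ j s) ^ 2)
        ≤ 1 / 2 * W Δx lam n l' l ξ (j + 1)
            (fun s => (Xv Δx Δt n l' l ξ (j + 1) s) ^ 2 + Δx ^ 2) := by linarith [h1]
      _ = 1 / 2 * (W Δx lam n l' l ξ (j + 1) (fun s => (Xv Δx Δt n l' l ξ (j + 1) s) ^ 2)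
            + Δx ^ 2 * W Δx lam n l' l ξ (j + 1) (fun _ => 1)) := by rw [h2]
      _ ≤ 1 / 2 * ((d : ℝ) * Δx ^ 2 * W Δx lam n l' l ξ (j + 1) (fun _ => 1)
            + Δx ^ 2 * W Δx lam n l' l ξ (j + 1) (fun _ => 1)) := by linarith [h3]
      _ = ((d : ℝ) + 1) * Δx ^ 2
            * (1 / 2 * W Δx lam n l' l ξ (j + 1) (fun _ => 1)) := by ring
      _ = ((d : ℝ) + 1) * Δx ^ 2 * W Δx lam n l' l ξ j (fun _ => 1) := by rw [h4]

end Stmt4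

open Stmt4 in
theorem statement4
    (Δx Δt lam : ℝ) (hΔx : 0 < Δx) (hΔt : 0 < Δt) (hlam : lam = Δt / Δx)
    (n : ℤ) (l' l : ℕ) (hl' : l' < l + 1)
    (hodd : (n + (l : ℤ) + 1) % 2 = 1)
    (ξ : ℝ → ℕ → ℝ) (hξ : ∀ (x : ℝ) (k : ℕ), ξ x k ∈ Set.Icc (-lam⁻¹) lam⁻¹)
    (k : ℕ) (hk₁ : l' ≤ k) (hk₂ : k ≤ l + 1) :
    (walkExp Δx lam n l' l ξ
        (fun s => |pathPos Δx n l' l s k - etaVal Δx Δt n l' l ξ s k|)) ^ 2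
      ≤ walkExp Δx lam n l' l ξ
          (fun s => (pathPos Δx n l' l s k - etaVal Δx Δt n l' l ξ s k) ^ 2) ∧
    walkExp Δx lam n l' l ξ
        (fun s => (pathPos Δx n l' l s k - etaVal Δx Δt n l' l ξ s k) ^ 2)
      ≤ (((l : ℝ) + 1) * Δt - (k : ℝ) * Δt) / lam * Δx := by
  have hlam0 : 0 < lam := by rw [hlam]; positivity
  -- total mass is 1
  have hmass : walkExp Δx lam n l' l ξ (fun _ => 1) = 1 := by
    rw [walkExp_eq, W_one l' le_rfl (by omega)]
    rw [← mul_pow]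
    norm_num
  have hprob_nonneg : ∀ s, 0 ≤ pathProb Δx lam n l' l ξ s := fun s =>
    prod_fac_nonneg hlam0 hξ s l'
  constructor
  · -- Cauchy–Schwarz
    have hcs := Finset.sum_mul_sq_le_sq_mul_sq Finset.univ
      (fun s : Idx l' l → Bool => Real.sqrt (pathProb Δx lam n l' l ξ s))
      (fun s : Idx l' l → Bool => Real.sqrt (pathProb Δx lam n l' l ξ s)
        * |pathPos Δx n l' l s k - etaVal Δx Δt n l' l ξ s k|)
    have e1 : ∑ s : Idx l' l → Bool,
        Real.sqrt (pathProb Δx lam n l' l ξ s)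
          * (Real.sqrt (pathProb Δx lam n l' l ξ s)
            * |pathPos Δx n l' l s k - etaVal Δx Δt n l' l ξ s k|)
        = walkExp Δx lam n l' l ξ
            (fun s => |pathPos Δx n l' l s k - etaVal Δx Δt n l' l ξ s k|) := by
      unfold walkExp
      refine Finset.sum_congr rfl fun s _ => ?_
      rw [← mul_assoc, Real.mul_self_sqrt (hprob_nonneg s)]
    have e2 : ∑ s : Idx l' l → Bool,
        Real.sqrt (pathProb Δx lam n l' l ξ s) ^ 2 = 1 := by
      have : ∑ s : Idx l' l → Bool, Real.sqrt (pathProb Δx lam n l' l ξ s) ^ 2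
          = walkExp Δx lam n l' l ξ (fun _ => 1) := by
        unfold walkExp
        refine Finset.sum_congr rfl fun s _ => ?_
        rw [Real.sq_sqrt (hprob_nonneg s)]
        ring
      rw [this, hmass]
    have e3 : ∑ s : Idx l' l → Bool,
        (Real.sqrt (pathProb Δx lam n l' l ξ s)
          * |pathPos Δx n l' l s k - etaVal Δx Δt n l' l ξ s k|) ^ 2
        = walkExp Δx lam n l' l ξ
            (fun s => (pathPos Δx n l' l s k - etaVal Δx Δt n l' l ξ s k) ^ 2) := by
      unfold walkExp
      refine Finset.sum_congr rfl fun s _ => ?_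
      rw [mul_pow, Real.sq_sqrt (hprob_nonneg s), sq_abs]
    rw [e1, e2, e3] at hcs
    linarith
  · -- variance bound
    have hXeq : walkExp Δx lam n l' l ξ
        (fun s => (pathPos Δx n l' l s k - etaVal Δx Δt n l' l ξ s k) ^ 2)
        = W Δx lam n l' l ξ l' (fun s => (Xv Δx Δt n l' l ξ k s) ^ 2) := rfl
    have hchain := W_chain (Δx := Δx) (lam := lam) (n := n) (ξ := ξ)
      k hk₂ (fun s => (Xv Δx Δt n l' l ξ k s) ^ 2)
      (fun j hjA hjk s => by simp only [Xv_flip hjA hjk]) (k - l') l' (by omega) le_rfl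
    have hdk : k + (l + 1 - k) = l + 1 := by omega
    have hvar := W_var (n := n) hΔx hΔt hlam hξ (l + 1 - k) k hdk hk₁
    have hone : (1 / 2 : ℝ) ^ (k - l') * W Δx lam n l' l ξ k (fun _ => 1) = 1 := by
      have := W_chain (Δx := Δx) (lam := lam) (n := n) (ξ := ξ)
        k hk₂ (fun _ => 1) (fun _ _ _ _ => rfl) (k - l') l' (by omega) le_rfl
      rw [← this, W_one l' le_rfl (by omega), ← mul_pow]
      norm_num
    have hpow : (0 : ℝ) ≤ (1 / 2 : ℝ) ^ (k - l') := by positivity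
    have hbound : walkExp Δx lam n l' l ξ
        (fun s => (pathPos Δx n l' l s k - etaVal Δx Δt n l' l ξ s k) ^ 2)
        ≤ ((l + 1 - k : ℕ) : ℝ) * Δx ^ 2 := by
      rw [hXeq, hchain]
      calc (1 / 2 : ℝ) ^ (k - l') * W Δx lam n l' l ξ k (fun s => (Xv Δx Δt n l' l ξ k s) ^ 2)
          ≤ (1 / 2 : ℝ) ^ (k - l')
            * (((l + 1 - k : ℕ) : ℝ) * Δx ^ 2 * W Δx lam n l' l ξ k (fun _ => 1)) :=
            mul_le_mul_of_nonneg_left hvar hpow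
        _ = ((l + 1 - k : ℕ) : ℝ) * Δx ^ 2
            * ((1 / 2 : ℝ) ^ (k - l') * W Δx lam n l' l ξ k (fun _ => 1)) := by ring
        _ = ((l + 1 - k : ℕ) : ℝ) * Δx ^ 2 := by rw [hone]; ring
    have hcast : ((l + 1 - k : ℕ) : ℝ) = (l : ℝ) + 1 - (k : ℝ) := by
      push_cast [hk₂]
      ring
    have hDlam : Δt / lam = Δx := by
      rw [hlam]
      field_simp
    have heq : ((l : ℝ) + 1 - (k : ℝ)) * Δx ^ 2
        = (((l : ℝ) + 1) * Δt - (k : ℝ) * Δt) / lam * Δx := by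
      rw [hlam]
      field_simp
    rw [hcast] at hbound
    exact hbound.trans heq.le
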